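/- If the ordering graph restricted to edges of weight at least γ (for some γ > 1/2) is acyclic, then the Ranked Pairs output order contains every such edge: whenever at least γn voters rank τ before τ', the output ranks τ before τ'. -/

import Mathlib

/-- The fraction of the `n` voters (each voter `i` ranking transactions by the
injective rank function `rank i`) that rank `a` before `b`. -/
def voteWeight {V : Type*} (n : ℕ) (rank : Fin n → V → ℕ) (a b : V) : ℚ :=
  ((Finset.univ.filter (fun i : Fin n => rank i a < rank i b)).card : ℚ) / n

/-- A set `H` of directed edges has a directed cycle. -/
def hasCycle {V : Type*} (H : Set (V × V)) : Prop :=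
  ∃ v : V, Relation.TransGen (fun a b : V => (a, b) ∈ H) v v

/-- The greedy (Ranked Pairs) edge-selection process: iterate over the list of
edges, adding each edge to the accumulated set `H` unless doing so would create a
directed cycle in `H`. -/
noncomputable def greedy {V : Type*} : List (V × V) → Set (V × V) → Set (V × V)
  | [], H => H
  | e :: rest, H =>
      greedy rest
        (@ite _ (hasCycle (insert e H)) (Classical.propDecidable _) H (insert e H))

theorem greedy_mono' {V : Type*} : ∀ (L : List (V × V)) (H : Set (V × V)), H ⊆ greedy L H
  | [], _ => subset_rfl
  | e :: rest, H => by
    simp only [greedy]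
    split
    · exact greedy_mono' rest H
    · exact (Set.subset_insert e H).trans (greedy_mono' rest _)

theorem greedy_key' {V : Type*} {γ : ℚ} {w : V → V → ℚ}
    (hacyc : ¬ ∃ v : V, Relation.TransGen (fun a b : V => γ ≤ w a b) v v) :
    ∀ (L : List (V × V)) (H : Set (V × V)),
      L.Pairwise (fun e f => w f.1 f.2 ≤ w e.1 e.2) →
      (∀ e ∈ H, γ ≤ w e.1 e.2) →
      ∀ τ τ' : V, (τ, τ') ∈ L → γ ≤ w τ τ' → (τ, τ') ∈ greedy L H := by
  intro L
  induction L with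
  | nil => intro H _ _ τ τ' h; simp at h
  | cons e rest ih =>
    intro H hsort hH τ τ' hmem hγw
    rw [List.mem_cons] at hmem
    simp only [greedy]
    rcases hmem with heq | hmem
    · subst heq
      have hnc : ¬ hasCycle (insert (τ, τ') H) := by
        rintro ⟨v, hv⟩
        refine hacyc ⟨v, Relation.TransGen.mono ?_ _ _ hv⟩
        rintro a b hab
        rcases Set.mem_insert_iff.mp hab with h | h
        · have h1 : a = τ := congrArg Prod.fst h
          have h2 : b = τ' := congrArg Prod.snd h
          subst h1; subst h2; exact hγw
        · exact hH _ h
      rw [if_neg hnc]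
      exact greedy_mono' rest _ (Set.mem_insert _ _)
    · refine ih _ hsort.of_cons ?_ τ τ' hmem hγw
      intro f hf
      split at hf
      · exact hH _ hf
      · rcases Set.mem_insert_iff.mp hf with h | h
        · subst h
          exact le_trans hγw ((List.pairwise_cons.mp hsort).1 _ hmem)
        · exact hH _ h

/-- If the ordering graph restricted to edges of weight at least `γ` (for some
`γ > 1/2`) is acyclic, then the Ranked Pairs output contains every such edge:
whenever at least a `γ` fraction of voters rank `τ` before `τ'`, the output ranks
`τ` before `τ'`. -/
theorem acyclic_gamma_edges_accepted {V : Type*} [Fintype V] {n : ℕ} (hn : 0 < n)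
    (rank : Fin n → V → ℕ) (hinj : ∀ i, Function.Injective (rank i))
    (γ : ℚ) (hγ : 1 / 2 < γ)
    (hacyc : ¬ ∃ v : V,
      Relation.TransGen (fun a b : V => γ ≤ voteWeight n rank a b) v v)
    (L : List (V × V))
    (hmemL : ∀ a b : V, a ≠ b → (a, b) ∈ L)
    (hnd : L.Nodup)
    (hirr : ∀ e ∈ L, e.1 ≠ e.2)
    (hsort : L.Pairwise (fun e f => voteWeight n rank f.1 f.2 ≤ voteWeight n rank e.1 e.2))
    (τ τ' : V) (hne : τ ≠ τ')
    (hγw : γ ≤ voteWeight n rank τ τ') :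
    (τ, τ') ∈ greedy L ∅ := by
  exact greedy_key' hacyc L ∅ hsort (by simp) τ τ' (hmemL τ τ' hne) hγw
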